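/- Let μ be a Borel probability measure on ℂⁿ with finite moments of all orders (∫‖z‖ᵏ dμ < ∞ for all k), and let ν be a unitary symmetrization of μ, i.e. a Borel probability measure on ℂⁿ invariant under every unitary transformation whose pushforward under z ↦ ‖z‖ equals that of μ. Then for every positive integer k, ∫∫ |⟨z,w⟩|^{2k} dμ(z)dμ(w) ≥ ∫∫ |⟨z,w⟩|^{2k} dν(z)dν(w). -/

import Mathlib

open MeasureTheory
open scoped ComplexInnerProductSpace

namespace ComplexEnergyAux

noncomputable def Phi (n k : ℕ) (z : EuclideanSpace ℂ (Fin n)) :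
    EuclideanSpace ℂ ((Fin k → Fin n) × (Fin k → Fin n)) :=
  (WithLp.equiv 2 _).symm fun p =>
    (∏ t, (starRingEnd ℂ) (z (p.1 t))) * ∏ t, z (p.2 t)

lemma Phi_apply (n k : ℕ) (z : EuclideanSpace ℂ (Fin n))
    (p : (Fin k → Fin n) × (Fin k → Fin n)) :
    Phi n k z p = (∏ t, (starRingEnd ℂ) (z (p.1 t))) * ∏ t, z (p.2 t) := rfl

lemma inner_euclidean {n : ℕ} (z w : EuclideanSpace ℂ (Fin n)) :
    ⟪z, w⟫ = ∑ i, (starRingEnd ℂ) (z i) * w i := by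
  simp [PiLp.inner_apply, RCLike.inner_apply]
  exact Finset.sum_congr rfl fun _ _ => mul_comm _ _

lemma inner_Phi {n : ℕ} (k : ℕ) (z w : EuclideanSpace ℂ (Fin n)) :
    ⟪Phi n k z, Phi n k w⟫ = ((‖⟪z, w⟫‖ ^ (2 * k) : ℝ) : ℂ) := by
  rw [PiLp.inner_apply]
  simp only [RCLike.inner_apply]
  rw [Finset.sum_congr rfl fun p _ => mul_comm (Phi n k w p) ((starRingEnd ℂ) (Phi n k z p))]
  have lhs_eq : (∑ p : (Fin k → Fin n) × (Fin k → Fin n),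
      (starRingEnd ℂ) (Phi n k z p) * Phi n k w p)
      = (∑ i, z i * (starRingEnd ℂ) (w i)) ^ k
        * (∑ i, (starRingEnd ℂ) (z i) * w i) ^ k := by
    rw [Fintype.sum_prod_type, Fintype.sum_pow, Fintype.sum_pow, Finset.sum_mul_sum]
    refine Finset.sum_congr rfl fun I _ => Finset.sum_congr rfl fun J _ => ?_
    simp only [Phi_apply, map_mul, map_prod, Complex.conj_conj]
    rw [Finset.prod_mul_distrib, Finset.prod_mul_distrib]
    ring
  rw [lhs_eq]
  have h1 : (∑ i, z i * (starRingEnd ℂ) (w i)) = (starRingEnd ℂ) ⟪z, w⟫ := by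
    rw [inner_euclidean, map_sum]
    simp [map_mul]
  have h2 : (∑ i, (starRingEnd ℂ) (z i) * w i) = ⟪z, w⟫ := (inner_euclidean z w).symm
  rw [h1, h2, ← mul_pow]
  have h3 : (starRingEnd ℂ) ⟪z, w⟫ * ⟪z, w⟫ = ((‖⟪z, w⟫‖ ^ 2 : ℝ) : ℂ) := by
    rw [mul_comm, Complex.mul_conj, Complex.normSq_eq_norm_sq]
  rw [h3, ← Complex.ofReal_pow, ← pow_mul]

lemma coord_norm_le_norm {n : ℕ} (z : EuclideanSpace ℂ (Fin n)) (i : Fin n) :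
    ‖z i‖ ≤ ‖z‖ := by
  have h : ‖z i‖ = Real.sqrt (‖z i‖ ^ 2) := by
    rw [Real.sqrt_sq (norm_nonneg _)]
  rw [h, EuclideanSpace.norm_eq]
  exact Real.sqrt_le_sqrt (Finset.single_le_sum
    (f := fun j => ‖z j‖ ^ 2) (fun j _ => by positivity) (Finset.mem_univ i))

lemma norm_Phi_apply_le {n : ℕ} (k : ℕ) (z : EuclideanSpace ℂ (Fin n))
    (p : (Fin k → Fin n) × (Fin k → Fin n)) :
    ‖Phi n k z p‖ ≤ ‖z‖ ^ (2 * k) := by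
  rw [Phi_apply, norm_mul, norm_prod, norm_prod]
  have h1 : (∏ t, ‖(starRingEnd ℂ) (z (p.1 t))‖) ≤ ‖z‖ ^ k := by
    calc (∏ t, ‖(starRingEnd ℂ) (z (p.1 t))‖) ≤ ∏ _t : Fin k, ‖z‖ :=
          Finset.prod_le_prod (fun t _ => norm_nonneg _)
            (fun t _ => by rw [RCLike.norm_conj]; exact coord_norm_le_norm z _)
      _ = ‖z‖ ^ k := by
          rw [Finset.prod_const, Finset.card_univ, Fintype.card_fin]
  have h2 : (∏ t, ‖z (p.2 t)‖) ≤ ‖z‖ ^ k := by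
    calc (∏ t, ‖z (p.2 t)‖) ≤ ∏ _t : Fin k, ‖z‖ :=
          Finset.prod_le_prod (fun t _ => norm_nonneg _)
            (fun t _ => coord_norm_le_norm z _)
      _ = ‖z‖ ^ k := by
          rw [Finset.prod_const, Finset.card_univ, Fintype.card_fin]
  calc (∏ t, ‖(starRingEnd ℂ) (z (p.1 t))‖) * ∏ t, ‖z (p.2 t)‖
      ≤ ‖z‖ ^ k * ‖z‖ ^ k :=
        mul_le_mul h1 h2 (Finset.prod_nonneg fun t _ => norm_nonneg _) (by positivity)
    _ = ‖z‖ ^ (2 * k) := by rw [← pow_add, two_mul]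

lemma norm_Phi_le {n : ℕ} (k : ℕ) (z : EuclideanSpace ℂ (Fin n)) :
    ‖Phi n k z‖ ≤ Real.sqrt (Fintype.card ((Fin k → Fin n) × (Fin k → Fin n))) * ‖z‖ ^ (2 * k) := by
  rw [EuclideanSpace.norm_eq]
  have h : (∑ p, ‖Phi n k z p‖ ^ 2)
      ≤ (Fintype.card ((Fin k → Fin n) × (Fin k → Fin n)) : ℝ) * (‖z‖ ^ (2 * k)) ^ 2 := by
    calc (∑ p, ‖Phi n k z p‖ ^ 2) ≤ ∑ _p : (Fin k → Fin n) × (Fin k → Fin n), (‖z‖ ^ (2 * k)) ^ 2 :=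
          Finset.sum_le_sum fun p _ =>
            pow_le_pow_left₀ (norm_nonneg _) (norm_Phi_apply_le k z p) 2
      _ = _ := by rw [Finset.sum_const, Finset.card_univ, nsmul_eq_mul]
  calc Real.sqrt (∑ p, ‖Phi n k z p‖ ^ 2)
      ≤ Real.sqrt ((Fintype.card ((Fin k → Fin n) × (Fin k → Fin n)) : ℝ) * (‖z‖ ^ (2 * k)) ^ 2) :=
        Real.sqrt_le_sqrt h
    _ = _ := by rw [Real.sqrt_mul (by positivity), Real.sqrt_sq (by positivity)]

lemma continuous_Phi (n k : ℕ) : Continuous (Phi n k) := by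
  have hcoord : ∀ i : Fin n, Continuous fun z : EuclideanSpace ℂ (Fin n) => z i :=
    fun i => (continuous_apply i).comp (PiLp.continuous_ofLp 2 _)
  have hraw : Continuous fun (z : EuclideanSpace ℂ (Fin n))
      (p : (Fin k → Fin n) × (Fin k → Fin n)) =>
      (∏ t, (starRingEnd ℂ) (z (p.1 t))) * ∏ t, z (p.2 t) := by
    refine continuous_pi fun p => Continuous.mul ?_ ?_
    · exact continuous_finset_prod _ fun t _ =>
        Complex.continuous_conj.comp (hcoord (p.1 t))
    · exact continuous_finset_prod _ fun t _ => hcoord (p.2 t)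
  exact (PiLp.continuous_toLp 2 _).comp hraw

lemma exists_unitary {n : ℕ} (hn : 0 < n) (u v : EuclideanSpace ℂ (Fin n))
    (hu : ‖u‖ = 1) (hv : ‖v‖ = 1) :
    ∃ U : EuclideanSpace ℂ (Fin n) ≃ₗᵢ[ℂ] EuclideanSpace ℂ (Fin n), U u = v := by
  classical
  have hcard : Module.finrank ℂ (EuclideanSpace ℂ (Fin n)) = Fintype.card (Fin n) := by
    simp [finrank_euclideanSpace]
  set i0 : Fin n := ⟨0, hn⟩ with hi0
  have hON : ∀ (x : EuclideanSpace ℂ (Fin n)), ‖x‖ = 1 →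
      Orthonormal ℂ (({i0} : Set (Fin n)).restrict (fun _ => x)) := by
    intro x hx
    constructor
    · intro i; exact hx
    · intro i j hij
      exfalso
      apply hij
      have hi := i.2; have hj := j.2
      simp only [Set.mem_singleton_iff] at hi hj
      exact Subtype.ext (hi.trans hj.symm)
  obtain ⟨b₁, hb₁⟩ := (hON u hu).exists_orthonormalBasis_extension_of_card_eq hcard
  obtain ⟨b₂, hb₂⟩ := (hON v hv).exists_orthonormalBasis_extension_of_card_eq hcard
  refine ⟨b₁.repr.trans b₂.repr.symm, ?_⟩
  have h1 : u = b₁ i0 := (hb₁ i0 (Set.mem_singleton i0)).symm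
  have h2 : v = b₂ i0 := (hb₂ i0 (Set.mem_singleton i0)).symm
  rw [h1, h2, LinearIsometryEquiv.trans_apply, OrthonormalBasis.repr_self,
    OrthonormalBasis.repr_symm_single]

lemma ofReal_integral {α : Type*} [MeasurableSpace α] (μ : Measure α) (f : α → ℝ) :
    ((∫ x, f x ∂μ : ℝ) : ℂ) = ∫ x, ((f x : ℝ) : ℂ) ∂μ :=
  (@integral_ofReal α _ μ ℂ _ f).symm

end ComplexEnergyAux

/-- Complex version: the unitary symmetrization minimizes the `2k`-th modulus
inner-product energy among measures with the given radial distribution. -/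
theorem complex_energy_ge_unitary_symmetrization (n : ℕ)
    [MeasurableSpace (EuclideanSpace ℂ (Fin n))] [BorelSpace (EuclideanSpace ℂ (Fin n))]
    (μ ν : Measure (EuclideanSpace ℂ (Fin n)))
    [IsProbabilityMeasure μ] [IsProbabilityMeasure ν]
    (hmom : ∀ k : ℕ, Integrable (fun z => ‖z‖ ^ k) μ)
    (huni : ∀ U : EuclideanSpace ℂ (Fin n) ≃ₗᵢ[ℂ] EuclideanSpace ℂ (Fin n),
      Measure.map U ν = ν)
    (hrad : Measure.map (fun z => ‖z‖) μ = Measure.map (fun z => ‖z‖) ν)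
    (k : ℕ) (hk : 0 < k) :
    (∫ z, ∫ w, ‖⟪z, w⟫‖ ^ (2 * k) ∂μ ∂μ)
      ≥ ∫ z, ∫ w, ‖⟪z, w⟫‖ ^ (2 * k) ∂ν ∂ν := by
  classical
  have h2k : 2 * k ≠ 0 := by omega
  rcases Nat.eq_zero_or_pos n with hn | hn
  · subst hn
    have h0 : ∀ z w : EuclideanSpace ℂ (Fin 0), ‖⟪z, w⟫‖ ^ (2 * k) = 0 := by
      intro z w
      have hz : (⟪z, w⟫ : ℂ) = 0 := by
        rw [ComplexEnergyAux.inner_euclidean]; simp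
      rw [hz, norm_zero, zero_pow h2k]
    simp only [h0, integral_zero]
    exact le_refl _
  -- positive dimension
  have hnormmeas : Measurable fun z : EuclideanSpace ℂ (Fin n) => ‖z‖ := measurable_norm
  have hmomν : ∀ m : ℕ, Integrable (fun z : EuclideanSpace ℂ (Fin n) => ‖z‖ ^ m) ν := by
    intro m
    have hg : AEStronglyMeasurable (fun r : ℝ => r ^ m)
        (Measure.map (fun z : EuclideanSpace ℂ (Fin n) => ‖z‖) μ) :=
      (continuous_pow m).aestronglyMeasurable
    have h1 : Integrable (fun r : ℝ => r ^ m)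
        (Measure.map (fun z : EuclideanSpace ℂ (Fin n) => ‖z‖) μ) :=
      (integrable_map_measure hg hnormmeas.aemeasurable).2 (hmom m)
    rw [hrad] at h1
    have hg2 : AEStronglyMeasurable (fun r : ℝ => r ^ m)
        (Measure.map (fun z : EuclideanSpace ℂ (Fin n) => ‖z‖) ν) :=
      (continuous_pow m).aestronglyMeasurable
    exact (integrable_map_measure hg2 hnormmeas.aemeasurable).1 h1
  have hMrad : (∫ z, ‖z‖ ^ (2 * k) ∂μ) = ∫ z, ‖z‖ ^ (2 * k) ∂ν := by
    have h1 : (∫ r, r ^ (2 * k) ∂(Measure.map (fun z : EuclideanSpace ℂ (Fin n) => ‖z‖) μ))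
        = ∫ z, ‖z‖ ^ (2 * k) ∂μ :=
      integral_map hnormmeas.aemeasurable (continuous_pow (2 * k)).aestronglyMeasurable
    have h2 : (∫ r, r ^ (2 * k) ∂(Measure.map (fun z : EuclideanSpace ℂ (Fin n) => ‖z‖) ν))
        = ∫ z, ‖z‖ ^ (2 * k) ∂ν :=
      integral_map hnormmeas.aemeasurable (continuous_pow (2 * k)).aestronglyMeasurable
    rw [← h1, hrad, h2]
  -- integrability of Phi
  have hPhiint : ∀ (ρ : Measure (EuclideanSpace ℂ (Fin n))),
      Integrable (fun z : EuclideanSpace ℂ (Fin n) => ‖z‖ ^ (2 * k)) ρ →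
      Integrable (ComplexEnergyAux.Phi n k) ρ := by
    intro ρ hρ
    refine Integrable.mono'
      (hρ.const_mul (Real.sqrt (Fintype.card ((Fin k → Fin n) × (Fin k → Fin n)))))
      ((ComplexEnergyAux.continuous_Phi n k).aestronglyMeasurable) ?_
    filter_upwards with z
    exact ComplexEnergyAux.norm_Phi_le k z
  have hPhiμ : Integrable (ComplexEnergyAux.Phi n k) μ := hPhiint μ (hmom (2 * k))
  have hPhiν : Integrable (ComplexEnergyAux.Phi n k) ν := hPhiint ν (hmomν (2 * k))
  -- inner integral as an inner product with the mean vector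
  have hcast : ∀ (ρ : Measure (EuclideanSpace ℂ (Fin n))),
      Integrable (ComplexEnergyAux.Phi n k) ρ → ∀ z,
      ((∫ w, ‖⟪z, w⟫‖ ^ (2 * k) ∂ρ : ℝ) : ℂ)
        = ⟪ComplexEnergyAux.Phi n k z, ∫ x, ComplexEnergyAux.Phi n k x ∂ρ⟫ := by
    intro ρ hρ z
    rw [ComplexEnergyAux.ofReal_integral, ← integral_inner hρ]
    simp only [ComplexEnergyAux.inner_Phi]
  have hdouble : ∀ (ρ : Measure (EuclideanSpace ℂ (Fin n))),
      Integrable (ComplexEnergyAux.Phi n k) ρ →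
      (∫ z, ∫ w, ‖⟪z, w⟫‖ ^ (2 * k) ∂ρ ∂ρ)
        = ‖∫ x, ComplexEnergyAux.Phi n k x ∂ρ‖ ^ 2 := by
    intro ρ hρ
    have key : ((∫ z, ∫ w, ‖⟪z, w⟫‖ ^ (2 * k) ∂ρ ∂ρ : ℝ) : ℂ)
        = ((‖∫ x, ComplexEnergyAux.Phi n k x ∂ρ‖ ^ 2 : ℝ) : ℂ) := by
      rw [ComplexEnergyAux.ofReal_integral]
      have h1 : ∀ z, ((∫ w, ‖⟪z, w⟫‖ ^ (2 * k) ∂ρ : ℝ) : ℂ)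
          = (starRingEnd ℂ)
              ⟪∫ x, ComplexEnergyAux.Phi n k x ∂ρ, ComplexEnergyAux.Phi n k z⟫ :=
        fun z => (hcast ρ hρ z).trans (inner_conj_symm _ _).symm
      simp_rw [h1]
      rw [integral_conj, integral_inner hρ, inner_self_eq_norm_sq_to_K]
      simp only [map_pow, RCLike.conj_ofReal]
      norm_num
    exact_mod_cast key
  -- the mean vectors
  obtain ⟨Aμ, hAμ⟩ : ∃ A, A = ∫ x, ComplexEnergyAux.Phi n k x ∂μ := ⟨_, rfl⟩
  obtain ⟨Aν, hAν⟩ : ∃ A, A = ∫ x, ComplexEnergyAux.Phi n k x ∂ν := ⟨_, rfl⟩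
  -- invariance of the ν-energy kernel
  have hGinv : ∀ (U : EuclideanSpace ℂ (Fin n) ≃ₗᵢ[ℂ] EuclideanSpace ℂ (Fin n))
      (z : EuclideanSpace ℂ (Fin n)),
      (∫ w, ‖⟪U z, w⟫‖ ^ (2 * k) ∂ν) = ∫ w, ‖⟪z, w⟫‖ ^ (2 * k) ∂ν := by
    intro U z
    have hpt : ∀ w, ‖⟪U z, w⟫‖ ^ (2 * k)
        = ‖⟪z, U.symm w⟫‖ ^ (2 * k) := by
      intro w
      conv_lhs => rw [← U.apply_symm_apply w]
      rw [LinearIsometryEquiv.inner_map_map]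
    simp_rw [hpt]
    have hcont : Continuous fun w : EuclideanSpace ℂ (Fin n) =>
        ‖⟪z, w⟫‖ ^ (2 * k) :=
      (continuous_norm.comp (Continuous.inner continuous_const continuous_id)).pow _
    have hsm : AEStronglyMeasurable (fun w : EuclideanSpace ℂ (Fin n) =>
        ‖⟪z, w⟫‖ ^ (2 * k))
        (Measure.map (U.symm : EuclideanSpace ℂ (Fin n) → EuclideanSpace ℂ (Fin n)) ν) := by
      rw [huni U.symm]
      exact hcont.aestronglyMeasurable
    rw [← integral_map (U.symm.continuous.measurable.aemeasurable) hsm, huni U.symm]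
  have hGhom : ∀ (c : ℂ) (z : EuclideanSpace ℂ (Fin n)),
      (∫ w, ‖⟪c • z, w⟫‖ ^ (2 * k) ∂ν)
        = ‖c‖ ^ (2 * k) * ∫ w, ‖⟪z, w⟫‖ ^ (2 * k) ∂ν := by
    intro c z
    have hpt : ∀ w, ‖⟪c • z, w⟫‖ ^ (2 * k)
        = ‖c‖ ^ (2 * k) * ‖⟪z, w⟫‖ ^ (2 * k) := by
      intro w
      rw [inner_smul_left, norm_mul, RCLike.norm_conj, mul_pow]
    simp_rw [hpt]
    exact integral_const_mul _ _
  -- reduction to the radial moment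
  set e₁ : EuclideanSpace ℂ (Fin n) := EuclideanSpace.single ⟨0, hn⟩ 1 with he₁def
  have he₁ : ‖e₁‖ = 1 := by simp [he₁def, EuclideanSpace.norm_single]
  obtain ⟨C, hC⟩ : ∃ C : ℝ, C = ∫ w, ‖⟪e₁, w⟫‖ ^ (2 * k) ∂ν := ⟨_, rfl⟩
  have hFform : ∀ z : EuclideanSpace ℂ (Fin n),
      (∫ w, ‖⟪z, w⟫‖ ^ (2 * k) ∂ν) = C * ‖z‖ ^ (2 * k) := by
    intro z
    rcases eq_or_ne z 0 with rfl | hz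
    · have hpt : ∀ w : EuclideanSpace ℂ (Fin n),
          ‖⟪(0 : EuclideanSpace ℂ (Fin n)), w⟫‖ ^ (2 * k) = 0 := by
        intro w; rw [inner_zero_left, norm_zero, zero_pow h2k]
      simp_rw [hpt]
      rw [integral_zero, norm_zero, zero_pow h2k, mul_zero]
    · have hnz : ‖z‖ ≠ 0 := norm_ne_zero_iff.2 hz
      set u : EuclideanSpace ℂ (Fin n) := ((‖z‖ : ℝ)⁻¹ : ℂ) • z with hu
      have hun : ‖u‖ = 1 := by
        rw [hu, norm_smul]
        simp [norm_inv, Complex.norm_real, Real.norm_eq_abs,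
          abs_of_nonneg (norm_nonneg z), inv_mul_cancel₀ hnz]
      obtain ⟨U, hU⟩ := ComplexEnergyAux.exists_unitary hn e₁ u he₁ hun
      have hz' : z = ((‖z‖ : ℝ) : ℂ) • u := by
        rw [hu, smul_smul]
        rw [show ((‖z‖ : ℝ) : ℂ) * ((‖z‖ : ℝ)⁻¹ : ℂ) = 1 from
          mul_inv_cancel₀ (Complex.ofReal_ne_zero.mpr hnz)]
        rw [one_smul]
      calc (∫ w, ‖⟪z, w⟫‖ ^ (2 * k) ∂ν)
          = ∫ w, ‖⟪((‖z‖ : ℝ) : ℂ) • u, w⟫‖ ^ (2 * k) ∂ν := by rw [← hz']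
        _ = ‖((‖z‖ : ℝ) : ℂ)‖ ^ (2 * k) * ∫ w, ‖⟪u, w⟫‖ ^ (2 * k) ∂ν :=
            hGhom _ _
        _ = ‖z‖ ^ (2 * k) * ∫ w, ‖⟪u, w⟫‖ ^ (2 * k) ∂ν := by
            rw [Complex.norm_real, Real.norm_eq_abs, abs_of_nonneg (norm_nonneg z)]
        _ = ‖z‖ ^ (2 * k) * ∫ w, ‖⟪e₁, w⟫‖ ^ (2 * k) ∂ν := by
            rw [← hU, hGinv U e₁]
        _ = C * ‖z‖ ^ (2 * k) := by rw [← hC, mul_comm]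
  -- equality of mixed and pure ν-energy
  have hμ' : (∫ z, ∫ w, ‖⟪z, w⟫‖ ^ (2 * k) ∂ν ∂μ)
      = C * ∫ z, ‖z‖ ^ (2 * k) ∂μ := by
    simp only [hFform]
    exact integral_const_mul _ _
  have hν' : (∫ z, ∫ w, ‖⟪z, w⟫‖ ^ (2 * k) ∂ν ∂ν)
      = C * ∫ z, ‖z‖ ^ (2 * k) ∂ν := by
    simp only [hFform]
    exact integral_const_mul _ _
  have hint_eq : (∫ z, ∫ w, ‖⟪z, w⟫‖ ^ (2 * k) ∂ν ∂μ)
      = ∫ z, ∫ w, ‖⟪z, w⟫‖ ^ (2 * k) ∂ν ∂ν := by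
    rw [hμ', hν', hMrad]
  -- identify the mixed energy with ⟪Aν, Aμ⟫
  have hmu : ((∫ z, ∫ w, ‖⟪z, w⟫‖ ^ (2 * k) ∂ν ∂μ : ℝ) : ℂ)
      = (starRingEnd ℂ) ⟪Aν, Aμ⟫ := by
    rw [ComplexEnergyAux.ofReal_integral]
    have h1 : ∀ z, ((∫ w, ‖⟪z, w⟫‖ ^ (2 * k) ∂ν : ℝ) : ℂ)
        = (starRingEnd ℂ) ⟪Aν, ComplexEnergyAux.Phi n k z⟫ := by
      intro z
      rw [hcast ν hPhiν z, ← hAν, ← inner_conj_symm]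
    simp_rw [h1]
    rw [integral_conj, integral_inner hPhiμ, hAμ]
  have hnu : ((∫ z, ∫ w, ‖⟪z, w⟫‖ ^ (2 * k) ∂ν ∂ν : ℝ) : ℂ)
      = ((‖Aν‖ ^ 2 : ℝ) : ℂ) := by
    rw [hAν]
    exact_mod_cast congrArg (fun r : ℝ => (r : ℂ)) (hdouble ν hPhiν)
  have hkey : ‖(⟪Aν, Aμ⟫ : ℂ)‖ = ‖Aν‖ ^ 2 := by
    have hconj : (starRingEnd ℂ) ⟪Aν, Aμ⟫ = ((‖Aν‖ ^ 2 : ℝ) : ℂ) := by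
      rw [← hmu, hint_eq, hnu]
    calc ‖(⟪Aν, Aμ⟫ : ℂ)‖ = ‖(starRingEnd ℂ) (⟪Aν, Aμ⟫ : ℂ)‖ := (RCLike.norm_conj _).symm
      _ = ‖((‖Aν‖ ^ 2 : ℝ) : ℂ)‖ := by rw [hconj]
      _ = ‖Aν‖ ^ 2 := by rw [Complex.norm_real, Real.norm_eq_abs]; exact abs_of_nonneg (by positivity)
  rw [ge_iff_le, hdouble μ hPhiμ, hdouble ν hPhiν, ← hAμ, ← hAν]
  have hcs := norm_inner_le_norm (𝕜 := ℂ) Aν Aμ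
  rw [hkey] at hcs
  nlinarith [norm_nonneg Aμ, norm_nonneg Aν, sq_nonneg (‖Aν‖ - ‖Aμ‖)]
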